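/- Let j = diag(I_{m1}, -I_{m2}) and let R = [[R₁₁,R₁₂],[R₂₁,R₂₂]] satisfy R* j R ≤ j together with R₂₂* R₂₂ - R₁₂* R₁₂ ≥ I_{m2} at the initial time (e.g., R starting at I_m under a monotone flow). Then R₂₂ is invertible and ‖R₂₂⁻¹‖ ≤ 1. -/

import Mathlib

open Matrix
open scoped ComplexOrder Matrix.Norms.L2Operator

lemma aux_norm_le {n : ℕ} (A : Matrix (Fin n) (Fin n) ℂ)
    (hPSD : (Aᴴ * A - 1).PosSemidef) (x : EuclideanSpace ℂ (Fin n)) :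
    ‖x‖ ≤ ‖((WithLp.equiv 2 _).symm (A *ᵥ (WithLp.equiv 2 _ x)) : EuclideanSpace ℂ (Fin n))‖ := by
  set y : EuclideanSpace ℂ (Fin n) := (WithLp.equiv 2 _).symm (A *ᵥ (WithLp.equiv 2 _ x))
  have h := hPSD.dotProduct_mulVec_nonneg (WithLp.equiv 2 _ x)
  have h1 : star (WithLp.equiv 2 _ x) ⬝ᵥ ((Aᴴ * A - 1) *ᵥ (WithLp.equiv 2 _ x))
      = (‖y‖ : ℂ) ^ 2 - (‖x‖ : ℂ) ^ 2 := by
    rw [sub_mulVec, dotProduct_sub, one_mulVec]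
    have hy : star (WithLp.equiv 2 _ x) ⬝ᵥ ((Aᴴ * A) *ᵥ (WithLp.equiv 2 _ x))
        = star (WithLp.equiv 2 _ y) ⬝ᵥ (WithLp.equiv 2 _ y) := by
      rw [← mulVec_mulVec, dotProduct_mulVec, ← star_mulVec]
      rfl
    rw [hy, dotProduct_comm (star _), dotProduct_comm (star _)]
    simp only [WithLp.equiv_apply]
    rw [← EuclideanSpace.inner_eq_star_dotProduct, ← EuclideanSpace.inner_eq_star_dotProduct,
      inner_self_eq_norm_sq_to_K, inner_self_eq_norm_sq_to_K]
    rfl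
  rw [h1] at h
  have hc : ((‖y‖ ^ 2 - ‖x‖ ^ 2 : ℝ) : ℂ) = (‖y‖ : ℂ) ^ 2 - (‖x‖ : ℂ) ^ 2 := by push_cast; ring
  rw [← hc] at h
  have h3 : ‖x‖ ^ 2 ≤ ‖y‖ ^ 2 := by
    have : (0:ℝ) ≤ ‖y‖ ^ 2 - ‖x‖ ^ 2 := by exact_mod_cast h
    linarith
  exact (pow_le_pow_iff_left₀ (norm_nonneg x) (norm_nonneg y) two_ne_zero).mp h3

theorem stmt_7 (m₁ m₂ : ℕ)
    (j R : Matrix (Fin m₁ ⊕ Fin m₂) (Fin m₁ ⊕ Fin m₂) ℂ)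
    (hj : j = Matrix.fromBlocks 1 0 0 (-1))
    (hR : (j - Rᴴ * j * R).PosSemidef)
    (hR22 : ((R.toBlocks₂₂)ᴴ * R.toBlocks₂₂ - (R.toBlocks₁₂)ᴴ * R.toBlocks₁₂ -
      (1 : Matrix (Fin m₂) (Fin m₂) ℂ)).PosSemidef) :
    IsUnit R.toBlocks₂₂ ∧ ‖(R.toBlocks₂₂)⁻¹‖ ≤ 1 := by
  set A := R.toBlocks₂₂ with hA
  have hPSD : (Aᴴ * A - 1).PosSemidef := by
    have h := hR22.add (posSemidef_conjTranspose_mul_self R.toBlocks₁₂)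
    have : (Aᴴ * A - (R.toBlocks₁₂)ᴴ * R.toBlocks₁₂ - 1) + (R.toBlocks₁₂)ᴴ * R.toBlocks₁₂
        = Aᴴ * A - 1 := by abel
    rwa [this] at h
  have hPD : (Aᴴ * A).PosDef := by
    have h := (Matrix.PosDef.one (n := Fin m₂) (R := ℂ)).add_posSemidef hPSD
    have e : (1 : Matrix (Fin m₂) (Fin m₂) ℂ) + (Aᴴ * A - 1) = Aᴴ * A := by abel
    rwa [e] at h
  have hunit : IsUnit A := by
    rw [Matrix.isUnit_iff_isUnit_det]
    have := hPD.isUnit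
    rw [Matrix.isUnit_iff_isUnit_det, Matrix.det_mul] at this
    exact isUnit_of_mul_isUnit_right this
  refine ⟨hunit, ?_⟩
  have hdet : IsUnit A.det := (Matrix.isUnit_iff_isUnit_det A).mp hunit
  rw [Matrix.l2_opNorm_def]
  refine ContinuousLinearMap.opNorm_le_bound _ zero_le_one fun y => ?_
  rw [one_mul]
  set x : EuclideanSpace ℂ (Fin m₂) := (WithLp.equiv 2 _).symm (A⁻¹ *ᵥ (WithLp.equiv 2 _ y))
  have hy : (WithLp.equiv 2 _).symm (A *ᵥ (WithLp.equiv 2 _ x)) = y := by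
    simp only [x]
    rw [show (WithLp.equiv 2 ((Fin m₂) → ℂ)) ((WithLp.equiv 2 _).symm (A⁻¹ *ᵥ (WithLp.equiv 2 _ y)))
      = A⁻¹ *ᵥ (WithLp.equiv 2 _ y) from rfl]
    rw [mulVec_mulVec, Matrix.mul_nonsing_inv A hdet, one_mulVec]
    exact (WithLp.equiv 2 _).symm_apply_apply y
  have h := aux_norm_le A hPSD x
  rw [hy] at h
  have heq : ((LinearEquiv.trans toEuclideanLin LinearMap.toContinuousLinearMap) A⁻¹) y = x := by
    rfl
  rw [heq]
  exact h
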